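/- Fix an integer m ≥ 1 and define the n-th order, m sub-interval spline approximation f_{n,m}(x) = (2/√π) Σ_{i=0}^{m−1} Σ_{k=0}^n c_{n,k} (x/m)^{k+1} [p(k, ix/m)·exp(−i²x²/m²) + (−1)^k p(k, (i+1)x/m)·exp(−(i+1)²x²/m²)]. Then for every fixed real x ≥ 0, lim_{n→∞} f_{n,m}(x) = erf(x). -/

import Mathlib

open Real intervalIntegral Filter

/-- The error function. -/
noncomputable def erf (x : ℝ) : ℝ :=
  (2 / Real.sqrt π) * ∫ t in (0:ℝ)..x, Real.exp (-t ^ 2)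

/-- The Hermite-type polynomials `p k x`. -/
noncomputable def p : ℕ → ℝ → ℝ
  | 0 => fun _ => 1
  | (k + 1) => fun x => deriv (p k) x - 2 * x * p k x

/-- Spline coefficients `c_{n,k}`. -/
noncomputable def c (n k : ℕ) : ℝ :=
  ((Nat.factorial n : ℝ) / ((Nat.factorial (n - k) : ℝ) * (Nat.factorial (k + 1) : ℝ))) *
    ((Nat.factorial (2 * n + 1 - k) : ℝ) / (2 * (Nat.factorial (2 * n + 1) : ℝ)))

/-- The n-th order spline based approximation to the error function using `m`
equally spaced sub-intervals of `[0, x]`. -/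
noncomputable def fsub (n m : ℕ) (x : ℝ) : ℝ :=
  (2 / Real.sqrt π) * ∑ i ∈ Finset.range m, ∑ k ∈ Finset.range (n + 1),
    c n k * (x / m) ^ (k + 1) *
      (p k ((i : ℝ) * x / m) * Real.exp (-((i : ℝ) ^ 2 * x ^ 2 / (m : ℝ) ^ 2)) +
        (-1 : ℝ) ^ k * p k (((i : ℝ) + 1) * x / m) *
          Real.exp (-(((i : ℝ) + 1) ^ 2 * x ^ 2 / (m : ℝ) ^ 2)))


open Polynomial

noncomputable def Q : ℕ → Polynomial ℝ
  | 0 => 1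
  | (k + 1) => derivative (Q k) - Polynomial.C 2 * Polynomial.X * Q k

lemma p_eq (k : ℕ) : p k = fun t => (Q k).eval t := by
  induction k with
  | zero => funext t; simp [p, Q]
  | succ k ih =>
    funext t
    show deriv (p k) t - 2 * t * p k t = _
    rw [ih]
    simp [Q, Polynomial.deriv]

lemma Q_deriv : ∀ k : ℕ, derivative (Q (k+1)) = -(C (2*(k+1) : ℝ)) * Q k := by
  intro k
  induction k with
  | zero => simp [Q]
  | succ k ih =>
    have hQ2 : Q (k+1+1) = derivative (Q (k+1)) - C 2 * X * Q (k+1) := rfl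
    rw [hQ2]
    simp only [derivative_sub, derivative_mul, derivative_neg, derivative_C, derivative_X, ih]
    push_cast
    rw [show (2*((k:ℝ)+1+1)) = (2*((k:ℝ)+1)) + 2 by ring, C_add]
    have hQ1 : Q (k+1) = derivative (Q k) - C 2 * X * Q k := rfl
    rw [hQ1]
    ring

lemma Q_rec (k : ℕ) : Q (k+2) = -(C (2*(k+1):ℝ)) * Q k - C 2 * X * Q (k+1) := by
  show derivative (Q (k+1)) - C 2 * X * Q (k+1) = _
  rw [Q_deriv]

lemma Q_sq_le (x : ℝ) : ∀ k : ℕ, ∀ t : ℝ, |t| ≤ x →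
    ((Q k).eval t)^2 ≤ (8*x^2+3)^k * (k.factorial : ℝ) := by
  intro k
  induction k using Nat.strong_induction_on with
  | _ k ih =>
    match k with
    | 0 => intro t _; simp [Q]
    | 1 =>
      intro t ht
      have h1 : Q 1 = - (C 2 * X) := by simp [Q]
      have ht2 : t^2 ≤ x^2 := sq_le_sq' (by linarith [abs_le.mp ht]) (abs_le.mp ht).2
      simp only [h1, eval_neg, eval_mul, eval_ofNat, eval_C, eval_X, Nat.factorial_one,
        Nat.cast_one, mul_one, pow_one]
      nlinarith [sq_nonneg x, sq_nonneg t]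
    | (k+2) =>
      intro t ht
      have hx : 0 ≤ x := le_trans (abs_nonneg t) ht
      have ht2 : t^2 ≤ x^2 := sq_le_sq' (by linarith [abs_le.mp ht]) (abs_le.mp ht).2
      have hu := ih k (by omega) t ht
      have hv := ih (k+1) (by omega) t ht
      set u := (Q k).eval t with hu'
      set v := (Q (k+1)).eval t with hv'
      have he : (Q (k+2)).eval t = -(2*((k:ℝ)+1)) * u - 2*t*v := by
        rw [Q_rec]; simp [hu', hv']
      have hk0 : (0:ℝ) ≤ (k:ℝ) := Nat.cast_nonneg k
      have hfac0 : (0:ℝ) ≤ (k.factorial : ℝ) := Nat.cast_nonneg _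
      have hpow0 : (0:ℝ) ≤ (8*x^2+3)^k := by positivity
      have hfac1 : ((k+1).factorial : ℝ) = ((k:ℝ)+1) * k.factorial := by
        rw [Nat.factorial_succ]; push_cast; ring
      have hfac2 : ((k+2).factorial : ℝ) = ((k:ℝ)+2) * ((k+1).factorial) := by
        rw [Nat.factorial_succ]; push_cast; ring
      have hsq : (-(2*((k:ℝ)+1)) * u - 2*t*v)^2 ≤ 8*((k:ℝ)+1)^2 * u^2 + 8*t^2*v^2 := by
        nlinarith [sq_nonneg ((2*((k:ℝ)+1))*u - 2*t*v), sq_nonneg ((2*((k:ℝ)+1))*u + 2*t*v)]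
      have hb1 : 8*((k:ℝ)+1)^2 * u^2 ≤ 8*((k:ℝ)+1)^2 * ((8*x^2+3)^k * k.factorial) :=
        mul_le_mul_of_nonneg_left hu (by positivity)
      have hb2 : 8*t^2*v^2 ≤ 8*x^2 * ((8*x^2+3)^(k+1) * ((k+1).factorial : ℝ)) := by
        calc 8*t^2*v^2 ≤ 8*x^2*v^2 := by nlinarith [sq_nonneg v]
          _ ≤ 8*x^2 * ((8*x^2+3)^(k+1) * ((k+1).factorial : ℝ)) :=
              mul_le_mul_of_nonneg_left hv (by positivity)
      have A0 : (0:ℝ) ≤ (8*x^2+3)^2 - 8 := by nlinarith [sq_nonneg x]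
      have base : 8*((k:ℝ)+1) + 8*x^2*(8*x^2+3) ≤ (8*x^2+3)^2 * ((k:ℝ)+2) := by
        nlinarith [mul_nonneg hk0 A0, A0, sq_nonneg x]
      have hPF : (0:ℝ) ≤ ((k:ℝ)+1) * ((8*x^2+3)^k * (k.factorial : ℝ)) := by positivity
      have key : 8*((k:ℝ)+1)^2 * ((8*x^2+3)^k * (k.factorial : ℝ))
          + 8*x^2 * ((8*x^2+3)^(k+1) * ((k+1).factorial : ℝ))
          ≤ (8*x^2+3)^(k+2) * (((k+2).factorial : ℝ)) := by
        have hm := mul_le_mul_of_nonneg_left base hPF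
        calc 8*((k:ℝ)+1)^2 * ((8*x^2+3)^k * (k.factorial : ℝ))
              + 8*x^2 * ((8*x^2+3)^(k+1) * ((k+1).factorial : ℝ))
            = (((k:ℝ)+1) * ((8*x^2+3)^k * (k.factorial : ℝ)))
                * (8*((k:ℝ)+1) + 8*x^2*(8*x^2+3)) := by
              rw [hfac1]; ring
          _ ≤ (((k:ℝ)+1) * ((8*x^2+3)^k * (k.factorial : ℝ)))
                * ((8*x^2+3)^2 * ((k:ℝ)+2)) := hm
          _ = (8*x^2+3)^(k+2) * (((k+2).factorial : ℝ)) := by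
              rw [hfac2, hfac1]; ring
      rw [he]
      exact hsq.trans (by linarith [hb1, hb2, key])

noncomputable def gf : ℝ → ℝ := fun t => Real.exp (-t^2)

lemma contDiff_gf : ContDiff ℝ ⊤ gf := Real.contDiff_exp.comp ((contDiff_id.pow 2).neg)

lemma hasDerivAt_gf (t : ℝ) : HasDerivAt gf (-(2*t) * Real.exp (-t^2)) t := by
  have h1 : HasDerivAt (fun s : ℝ => -s^2) (-(2*t)) t := by
    have h0 := (hasDerivAt_pow 2 t).neg
    simp at h0
    exact h0
  have h2 := (Real.hasDerivAt_exp (-t^2)).comp t h1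
  rw [show (-(2*t)) * Real.exp (-t^2) = Real.exp (-t^2) * (-(2*t)) by ring]
  exact h2

lemma iteratedDeriv_gf (k : ℕ) : iteratedDeriv k gf = fun t => (Q k).eval t * Real.exp (-t^2) := by
  induction k with
  | zero => funext t; simp [Q, iteratedDeriv_zero, gf]
  | succ k ih =>
    funext t
    rw [iteratedDeriv_succ, ih]
    have h : HasDerivAt (fun t : ℝ => (Q k).eval t * Real.exp (-t^2))
        ((derivative (Q k)).eval t * Real.exp (-t^2)
          + (Q k).eval t * (-(2*t) * Real.exp (-t^2))) t :=
      ((Q k).hasDerivAt t).mul (hasDerivAt_gf t)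
    rw [h.deriv]
    show _ = (derivative (Q k) - Polynomial.C 2 * Polynomial.X * Q k).eval t * Real.exp (-t^2)
    simp only [eval_sub, eval_mul, eval_C, eval_X]
    ring

lemma ibp (f : ℝ → ℝ) (hf : ContDiff ℝ ⊤ f) (a b : ℝ) :
    ∀ (N : ℕ) (P : Polynomial ℝ),
    ∫ t in a..b, P.eval t * iteratedDeriv N f t =
      (∑ j ∈ Finset.range N, (-1:ℝ)^j *
        ((Polynomial.derivative^[j] P).eval b * iteratedDeriv (N-1-j) f b
          - (Polynomial.derivative^[j] P).eval a * iteratedDeriv (N-1-j) f a))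
      + (-1:ℝ)^N * ∫ t in a..b, (Polynomial.derivative^[N] P).eval t * f t := by
  intro N
  induction N with
  | zero => intro P; simp
  | succ N ih =>
    intro P
    have hv : ∀ t ∈ Set.uIcc a b, HasDerivAt (iteratedDeriv N f) (iteratedDeriv (N+1) f t) t := by
      intro t _
      have hd : DifferentiableAt ℝ (iteratedDeriv N f) t :=
        (hf.differentiable_iteratedDeriv N (by simp)) t
      rw [iteratedDeriv_succ]
      exact hd.hasDerivAt
    have hIBP := intervalIntegral.integral_mul_deriv_eq_deriv_mul
      (u := fun t => P.eval t) (u' := fun t => (derivative P).eval t)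
      (v := iteratedDeriv N f) (v' := iteratedDeriv (N+1) f)
      (fun t _ => P.hasDerivAt t) hv
      ((derivative P).continuous.intervalIntegrable a b)
      ((hf.continuous_iteratedDeriv (N+1) (by simp)).intervalIntegrable a b)
    rw [hIBP, ih (derivative P)]
    rw [Finset.sum_range_succ']
    have hidx : ∀ j : ℕ, N - 1 - j = N + 1 - 1 - (j + 1) := by intro j; omega
    simp only [Function.iterate_succ_apply, pow_succ, pow_zero, one_mul,
      Function.iterate_zero_apply, Nat.add_sub_cancel, Nat.succ_sub_one, Nat.sub_zero]
    have hS : (∑ j ∈ Finset.range N, (-1:ℝ)^j * -1 *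
          ((Polynomial.derivative^[j] (derivative P)).eval b * iteratedDeriv (N-(j+1)) f b -
           (Polynomial.derivative^[j] (derivative P)).eval a * iteratedDeriv (N-(j+1)) f a)) =
        - ∑ j ∈ Finset.range N, (-1:ℝ)^j *
          ((Polynomial.derivative^[j] (derivative P)).eval b * iteratedDeriv (N-1-j) f b -
           (Polynomial.derivative^[j] (derivative P)).eval a * iteratedDeriv (N-1-j) f a) := by
      rw [← Finset.sum_neg_distrib]
      exact Finset.sum_congr rfl
        (fun j _ => by rw [show N - (j+1) = N - 1 - j from by omega]; ring)
    rw [hS]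
    ring

noncomputable def W (a b : ℝ) (n : ℕ) : Polynomial ℝ := (X - C a)^(n+1) * (C b - X)^(n+1)

lemma eval_iter_deriv (P : Polynomial ℝ) (r : ℝ) (j : ℕ) :
    (Polynomial.derivative^[j] P).eval r = (j.factorial : ℝ) * ((Polynomial.taylor r P).coeff j) := by
  rw [taylor_coeff, ← factorial_smul_hasseDeriv]
  simp [nsmul_eq_mul]

lemma taylor_W_a (a b : ℝ) (n : ℕ) :
    Polynomial.taylor a (W a b n) = X^(n+1) * (C (b-a) - X)^(n+1) := by
  simp only [W, taylor_apply, mul_comp, pow_comp, sub_comp, X_comp, C_comp]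
  rw [C_sub]
  ring_nf

lemma taylor_W_b (a b : ℝ) (n : ℕ) :
    Polynomial.taylor b (W a b n) = C ((-1:ℝ)^(n+1)) * (X^(n+1) * (X + C (b-a))^(n+1)) := by
  simp only [W, taylor_apply, mul_comp, pow_comp, sub_comp, X_comp, C_comp]
  rw [C_sub, show ((-1:ℝ)^(n+1)) = ((-1:ℝ))^(n+1) from rfl]
  rw [show (C ((-1:ℝ)^(n+1)) : ℝ[X]) = (-1)^(n+1) from by simp]
  ring_nf

lemma coeff_aux1 (h : ℝ) (n s : ℕ) :
    ((C h - X : ℝ[X])^(n+1)).coeff s = (-1:ℝ)^(n+1) * ((-h)^(n+1-s) * ((n+1).choose s)) := by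
  rw [show (C h - X : ℝ[X]) = -(X + C (-h)) from by rw [C_neg]; ring, neg_pow,
    show ((-1 : ℝ[X]))^(n+1) = C ((-1:ℝ)^(n+1)) from by simp, coeff_C_mul, coeff_X_add_C_pow]

lemma Wa_eval (a b : ℝ) (n k : ℕ) (hk : k ≤ n) :
    (Polynomial.derivative^[2*n+1-k] (W a b n)).eval a
      = ((2*n+1-k).factorial : ℝ) * ((-1:ℝ)^(n+k) * ((b-a)^(k+1) * ((n+1).choose (n-k)))) := by
  rw [eval_iter_deriv, taylor_W_a, show 2*n+1-k = (n-k) + (n+1) from by omega,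
    coeff_X_pow_mul, coeff_aux1, show (n+1) - (n-k) = k+1 from by omega]
  have h1 : (-(b-a))^(k+1) = (-1:ℝ)^(k+1) * (b-a)^(k+1) := by rw [neg_pow]
  have h2 : (-1:ℝ)^(n+1) * (-1:ℝ)^(k+1) = (-1:ℝ)^(n+k) := by
    rw [← pow_add, show n+1+(k+1) = (n+k)+2 from by omega, pow_add]; norm_num
  rw [h1]
  ring_nf

lemma Wb_eval (a b : ℝ) (n k : ℕ) (hk : k ≤ n) :
    (Polynomial.derivative^[2*n+1-k] (W a b n)).eval b
      = ((2*n+1-k).factorial : ℝ) * ((-1:ℝ)^(n+1) * ((b-a)^(k+1) * ((n+1).choose (n-k)))) := by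
  rw [eval_iter_deriv, taylor_W_b, coeff_C_mul, show 2*n+1-k = (n-k) + (n+1) from by omega,
    coeff_X_pow_mul, coeff_X_add_C_pow, show (n+1) - (n-k) = k+1 from by omega]

lemma Wa_eval_zero (a b : ℝ) (n j : ℕ) (hj : j ≤ n) :
    (Polynomial.derivative^[j] (W a b n)).eval a = 0 := by
  rw [eval_iter_deriv, taylor_W_a, coeff_X_pow_mul']
  rw [if_neg (by omega)]
  simp

lemma Wb_eval_zero (a b : ℝ) (n j : ℕ) (hj : j ≤ n) :
    (Polynomial.derivative^[j] (W a b n)).eval b = 0 := by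
  rw [eval_iter_deriv, taylor_W_b, coeff_C_mul, coeff_X_pow_mul']
  rw [if_neg (by omega)]
  simp

lemma W_iter_top (a b : ℝ) (n : ℕ) :
    Polynomial.derivative^[2*n+2] (W a b n) = C (((2*n+2).factorial : ℝ) * (-1:ℝ)^(n+1)) := by
  have hdeg1 : ((X - C a : ℝ[X])^(n+1)).natDegree = n+1 := by
    rw [natDegree_pow, natDegree_X_sub_C, mul_one]
  have hneg : (C b - X : ℝ[X]) = -(X - C b) := by ring
  have hdeg2 : ((C b - X : ℝ[X])^(n+1)).natDegree = n+1 := by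
    rw [hneg, natDegree_pow, natDegree_neg, natDegree_X_sub_C, mul_one]
  ext m
  rw [coeff_iterate_derivative]
  match m with
  | 0 =>
    have htop : (W a b n).coeff (0 + (2*n+2)) = (-1:ℝ)^(n+1) := by
      have := coeff_mul_degree_add_degree ((X - C a : ℝ[X])^(n+1)) ((C b - X : ℝ[X])^(n+1))
      rw [hdeg1, hdeg2] at this
      rw [show 0 + (2*n+2) = (n+1) + (n+1) from by omega]
      rw [W, this]
      rw [leadingCoeff_pow, leadingCoeff_pow, hneg, leadingCoeff_neg]
      rw [(monic_X_sub_C a).leadingCoeff, (monic_X_sub_C b).leadingCoeff]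
      norm_num
    rw [htop]
    rw [show (0 + (2*n+2)).descFactorial (2*n+2) = (2*n+2).factorial from by
      rw [Nat.zero_add, Nat.descFactorial_self]]
    rw [coeff_C, if_pos rfl]
    rw [nsmul_eq_mul]
  | (s+1) =>
    have hdegW : (W a b n).natDegree ≤ 2*n+2 := by
      refine le_trans (natDegree_mul_le) ?_
      rw [hdeg1, hdeg2]; omega
    have h0 : (W a b n).coeff (s+1 + (2*n+2)) = 0 :=
      coeff_eq_zero_of_natDegree_lt (by omega)
    rw [h0, coeff_C, if_neg (by omega)]
    simp

lemma c_eq (n k : ℕ) (hk : k ≤ n) :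
    (((2*n+2).factorial : ℝ))⁻¹ * (((2*n+1-k).factorial : ℝ) * (((n+1).choose (n-k) : ℕ) : ℝ))
      = c n k := by
  have hch := Nat.choose_mul_factorial_mul_factorial (show n-k ≤ n+1 by omega)
  rw [show n+1-(n-k) = k+1 from by omega] at hch
  have hch' : (((n+1).choose (n-k) : ℝ)) * ((n-k).factorial : ℝ) * ((k+1).factorial : ℝ)
      = ((n+1).factorial : ℝ) := by exact_mod_cast hch
  have h2 : ((2*n+2).factorial : ℝ) = (2*(n:ℝ)+2) * ((2*n+1).factorial : ℝ) := by
    rw [show 2*n+2 = (2*n+1)+1 from by omega, Nat.factorial_succ]; push_cast; ring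
  have h3 : ((n+1).factorial : ℝ) = ((n:ℝ)+1) * (n.factorial : ℝ) := by
    rw [Nat.factorial_succ]; push_cast; ring
  have nz : ∀ m : ℕ, ((m.factorial : ℝ)) ≠ 0 :=
    fun m => Nat.cast_ne_zero.mpr (Nat.factorial_ne_zero m)
  have hchoose : (((n+1).choose (n-k) : ℕ) : ℝ)
      = ((n+1).factorial : ℝ) / (((n-k).factorial : ℝ) * ((k+1).factorial : ℝ)) := by
    rw [eq_div_iff (by exact mul_ne_zero (nz _) (nz _))]
    linarith [hch']
  rw [hchoose, c, h2, h3]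
  have hn1 : ((n:ℝ)+1) ≠ 0 := by positivity
  have h2n2 : (2*(n:ℝ)+2) ≠ 0 := by positivity
  field_simp

noncomputable def Kp (a b : ℝ) (n : ℕ) : Polynomial ℝ := C ((((2*n+2).factorial : ℝ))⁻¹) * W a b n

lemma key_identity (n : ℕ) (a b : ℝ) :
    ∑ k ∈ Finset.range (n+1), c n k * (b-a)^(k+1) *
        (iteratedDeriv k gf a + (-1:ℝ)^k * iteratedDeriv k gf b)
      - ∫ t in a..b, gf t
    = (-1:ℝ)^n * ∫ t in a..b, (Kp a b n).eval t * iteratedDeriv (2*n+2) gf t := by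
  have nzfac : (((2*n+2).factorial : ℝ)) ≠ 0 := Nat.cast_ne_zero.mpr (Nat.factorial_ne_zero _)
  have hibp := ibp gf contDiff_gf a b (2*n+2) (Kp a b n)
  -- top derivative is the constant (-1)^(n+1)
  have htop : (Polynomial.derivative^[2*n+2] (Kp a b n)) = C ((-1:ℝ)^(n+1)) := by
    rw [Kp, Polynomial.iterate_derivative_C_mul, W_iter_top, ← C_mul]
    congr 1
    field_simp
  rw [htop] at hibp
  -- evaluate the last integral
  have hlast : ∫ t in a..b, (C ((-1:ℝ)^(n+1)) : ℝ[X]).eval t * gf t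
      = (-1:ℝ)^(n+1) * ∫ t in a..b, gf t := by
    simp only [eval_C]
    exact intervalIntegral.integral_const_mul _ _
  rw [hlast] at hibp
  have hpow1 : (-1:ℝ)^(2*n+2) = 1 := by
    rw [show 2*n+2 = 2*(n+1) from by ring, pow_mul]; norm_num
  rw [hpow1, one_mul] at hibp
  -- reflect the boundary sum
  rw [← Finset.sum_range_reflect] at hibp
  -- kill the terms with k > n
  have hzero : ∀ k ∈ Finset.range (2*n+2), k ∉ Finset.range (n+1) →
      (-1:ℝ)^(2*n+2-1-k) *
        ((Polynomial.derivative^[2*n+2-1-k] (Kp a b n)).eval b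
            * iteratedDeriv (2*n+2-1-(2*n+2-1-k)) gf b
          - (Polynomial.derivative^[2*n+2-1-k] (Kp a b n)).eval a
            * iteratedDeriv (2*n+2-1-(2*n+2-1-k)) gf a) = 0 := by
    intro k hk hk'
    simp only [Finset.mem_range] at hk hk'
    have hj : 2*n+2-1-k ≤ n := by omega
    rw [Kp, Polynomial.iterate_derivative_C_mul, eval_mul, eval_mul, eval_C,
      Wa_eval_zero a b n _ hj, Wb_eval_zero a b n _ hj]
    ring
  rw [← Finset.sum_subset (Finset.range_subset_range.mpr (show n+1 ≤ 2*n+2 by omega)) hzero] at hibp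
  -- identify each remaining term
  have hterm : ∀ k ∈ Finset.range (n+1),
      (-1:ℝ)^(2*n+2-1-k) *
        ((Polynomial.derivative^[2*n+2-1-k] (Kp a b n)).eval b
            * iteratedDeriv (2*n+2-1-(2*n+2-1-k)) gf b
          - (Polynomial.derivative^[2*n+2-1-k] (Kp a b n)).eval a
            * iteratedDeriv (2*n+2-1-(2*n+2-1-k)) gf a)
      = (-1:ℝ)^n * (c n k * (b-a)^(k+1) *
          (iteratedDeriv k gf a + (-1:ℝ)^k * iteratedDeriv k gf b)) := by
    intro k hk
    simp only [Finset.mem_range] at hk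
    have hkn : k ≤ n := by omega
    have e1 : 2*n+2-1-k = 2*n+1-k := by omega
    have e2 : 2*n+2-1-(2*n+2-1-k) = k := by omega
    rw [e2, e1]
    simp only [Kp, Polynomial.iterate_derivative_C_mul, eval_mul, eval_C]
    rw [Wa_eval a b n k hkn, Wb_eval a b n k hkn]
    have hc := c_eq n k hkn
    have hsign : (-1:ℝ)^(2*n+1-k) = (-1:ℝ)^(k+1) := by
      rw [show 2*n+1-k = (k+1) + 2*(n-k) from by omega, pow_add, pow_mul]
      norm_num
    rw [hsign, ← hc]
    have hss : ((-1:ℝ)^k) * ((-1:ℝ)^k) = 1 := by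
      rw [← pow_add, ← two_mul, pow_mul]; norm_num
    linear_combination ((-1:ℝ)^n * (((2*n+2).factorial:ℝ))⁻¹ * ((2*n+1-k).factorial:ℝ)
      * (b-a)^(k+1) * (((n+1).choose (n-k) : ℕ):ℝ) * iteratedDeriv k gf a) * hss
  rw [Finset.sum_congr rfl hterm] at hibp
  rw [← Finset.mul_sum] at hibp
  have hsq : (-1:ℝ)^n * (-1:ℝ)^n = 1 := by
    rw [← pow_add, ← two_mul, pow_mul]; norm_num
  have hsq2 : (-1:ℝ)^n * (-1:ℝ)^(n+1) = -1 := by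
    rw [← pow_add, show n+(n+1) = 2*n+1 from by ring, pow_add, pow_mul]; norm_num
  rw [hibp, mul_add, ← mul_assoc, ← mul_assoc, hsq, hsq2]
  ring

lemma key_bound (n : ℕ) (x a b : ℝ) (ha : 0 ≤ a) (hab : a ≤ b) (hbx : b ≤ x) :
    |∑ k ∈ Finset.range (n+1), c n k * (b-a)^(k+1) *
        (iteratedDeriv k gf a + (-1:ℝ)^k * iteratedDeriv k gf b)
      - ∫ t in a..b, gf t|
    ≤ x * (x^2*(8*x^2+3))^(n+1) / Real.sqrt (((2*n+2).factorial : ℝ)) := by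
  have hx : 0 ≤ x := le_trans ha (le_trans hab hbx)
  have hF0 : (0:ℝ) < ((2*n+2).factorial : ℝ) := by
    exact_mod_cast Nat.factorial_pos _
  have hsF : (0:ℝ) < Real.sqrt ((2*n+2).factorial : ℝ) := Real.sqrt_pos.mpr hF0
  have hss : Real.sqrt (((2*n+2).factorial : ℝ)) * Real.sqrt (((2*n+2).factorial : ℝ))
      = ((2*n+2).factorial : ℝ) := Real.mul_self_sqrt hF0.le
  rw [key_identity, abs_mul, abs_pow, abs_neg, abs_one, one_pow, one_mul]
  set Cb : ℝ := (((2*n+2).factorial : ℝ))⁻¹ * x^(2*n+2) *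
      ((8*x^2+3)^(n+1) * Real.sqrt (((2*n+2).factorial : ℝ))) with hCb
  have hpoint : ∀ t ∈ Set.uIoc a b, ‖(Kp a b n).eval t * iteratedDeriv (2*n+2) gf t‖ ≤ Cb := by
    intro t ht
    rw [Set.uIoc_of_le hab] at ht
    obtain ⟨hta, htb⟩ := ht
    have ht0 : 0 ≤ t := le_trans ha hta.le
    have htx : t ≤ x := le_trans htb hbx
    have habs : |t| ≤ x := by rw [abs_of_nonneg ht0]; exact htx
    have hKeval : (Kp a b n).eval t
        = (((2*n+2).factorial : ℝ))⁻¹ * ((t-a)^(n+1) * (b-t)^(n+1)) := by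
      simp [Kp, W]
    have hQle : |(Q (2*n+2)).eval t| ≤ (8*x^2+3)^(n+1) * Real.sqrt (((2*n+2).factorial : ℝ)) := by
      have h1 := Q_sq_le x (2*n+2) t habs
      have h2 : |(Q (2*n+2)).eval t| = Real.sqrt (((Q (2*n+2)).eval t)^2) :=
        (Real.sqrt_sq_eq_abs _).symm
      rw [h2]
      calc Real.sqrt (((Q (2*n+2)).eval t)^2)
          ≤ Real.sqrt ((8*x^2+3)^(2*n+2) * (((2*n+2).factorial : ℝ))) := Real.sqrt_le_sqrt h1
        _ = (8*x^2+3)^(n+1) * Real.sqrt (((2*n+2).factorial : ℝ)) := by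
            rw [Real.sqrt_mul (by positivity)]
            congr 1
            rw [show (8*x^2+3)^(2*n+2) = ((8*x^2+3)^(n+1))^2 from by ring]
            exact Real.sqrt_sq (by positivity)
    rw [Real.norm_eq_abs, abs_mul, hKeval, iteratedDeriv_gf]
    have h1 : (0:ℝ) ≤ t - a := by linarith
    have h2 : (0:ℝ) ≤ b - t := by linarith
    have hWnn : (0:ℝ) ≤ (t-a)^(n+1) * (b-t)^(n+1) :=
      mul_nonneg (pow_nonneg h1 _) (pow_nonneg h2 _)
    have hW : |(((2*n+2).factorial : ℝ))⁻¹ * ((t-a)^(n+1) * (b-t)^(n+1))|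
        ≤ (((2*n+2).factorial : ℝ))⁻¹ * x^(2*n+2) := by
      rw [abs_of_nonneg (mul_nonneg (by positivity) hWnn)]
      apply mul_le_mul_of_nonneg_left _ (by positivity)
      calc (t-a)^(n+1) * (b-t)^(n+1) ≤ x^(n+1) * x^(n+1) := by
            apply mul_le_mul (pow_le_pow_left₀ h1 (by linarith) _)
              (pow_le_pow_left₀ h2 (by linarith) _) (pow_nonneg h2 _) (by positivity)
        _ = x^(2*n+2) := by rw [← pow_add]; congr 1; omega
    have hexp : |(Q (2*n+2)).eval t * Real.exp (-t^2)|
        ≤ (8*x^2+3)^(n+1) * Real.sqrt (((2*n+2).factorial : ℝ)) := by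
      rw [abs_mul, abs_of_nonneg (Real.exp_nonneg _)]
      calc |(Q (2*n+2)).eval t| * Real.exp (-t^2) ≤ |(Q (2*n+2)).eval t| * 1 := by
            apply mul_le_mul_of_nonneg_left _ (abs_nonneg _)
            exact Real.exp_le_one_iff.mpr (by nlinarith)
        _ = |(Q (2*n+2)).eval t| := mul_one _
        _ ≤ _ := hQle
    rw [hCb]
    calc |(((2*n+2).factorial : ℝ))⁻¹ * ((t-a)^(n+1) * (b-t)^(n+1))|
          * |(Q (2*n+2)).eval t * Real.exp (-t^2)|
        ≤ ((((2*n+2).factorial : ℝ))⁻¹ * x^(2*n+2))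
          * ((8*x^2+3)^(n+1) * Real.sqrt (((2*n+2).factorial : ℝ))) :=
          mul_le_mul hW hexp (abs_nonneg _) (by positivity)
      _ = _ := rfl
  have hInt := intervalIntegral.norm_integral_le_of_norm_le_const hpoint
  rw [Real.norm_eq_abs] at hInt
  have hCb0 : 0 ≤ Cb := by rw [hCb]; positivity
  have hinv : (((2*n+2).factorial : ℝ))⁻¹ * (((2*n+2).factorial : ℝ)) = 1 :=
    inv_mul_cancel₀ hF0.ne'
  have hfinal : Cb * x = x * (x^2*(8*x^2+3))^(n+1) / Real.sqrt (((2*n+2).factorial : ℝ)) := by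
    rw [hCb, eq_div_iff hsF.ne']
    have hxp : (x^2*(8*x^2+3))^(n+1) = x^(2*n+2) * (8*x^2+3)^(n+1) := by
      rw [mul_pow, ← pow_mul, show 2*(n+1) = 2*n+2 from by omega]
    rw [hxp]
    linear_combination (x^(2*n+2) * (8*x^2+3)^(n+1) * x * (((2*n+2).factorial : ℝ))⁻¹) * hss
      + (x^(2*n+2) * (8*x^2+3)^(n+1) * x) * hinv
  calc |∫ t in a..b, (Kp a b n).eval t * iteratedDeriv (2*n+2) gf t| ≤ Cb * |b - a| := hInt
    _ ≤ Cb * x := by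
        apply mul_le_mul_of_nonneg_left _ hCb0
        rw [abs_of_nonneg (by linarith)]
        linarith
    _ = _ := hfinal

lemma bound_tendsto (x : ℝ) (hx : 0 ≤ x) :
    Tendsto (fun n : ℕ => x * (x^2*(8*x^2+3))^(n+1) / Real.sqrt (((2*n+2).factorial : ℝ)))
      atTop (nhds 0) := by
  set g0 : ℝ := x^2*(8*x^2+3) with hg0
  have hg00 : 0 ≤ g0 := by positivity
  have h1 : Tendsto (fun j : ℕ => g0^j / (j.factorial : ℝ)) atTop (nhds 0) :=
    FloorSemiring.tendsto_pow_div_factorial_atTop g0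
  have h2 : Tendsto (fun n : ℕ => 2*n+2) atTop atTop :=
    tendsto_atTop_mono (fun n => by omega : ∀ n : ℕ, n ≤ 2*n+2) tendsto_id
  have h3 : Tendsto (fun n : ℕ => g0^(2*n+2) / (((2*n+2).factorial : ℝ))) atTop (nhds 0) :=
    h1.comp h2
  have h4 : Tendsto (fun n : ℕ => Real.sqrt (g0^(2*n+2) / (((2*n+2).factorial : ℝ))))
      atTop (nhds 0) := by
    have := (Real.continuous_sqrt.tendsto 0).comp h3
    simpa [Function.comp_def] using this
  have h5 : Tendsto (fun n : ℕ => x * Real.sqrt (g0^(2*n+2) / (((2*n+2).factorial : ℝ))))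
      atTop (nhds 0) := by simpa using h4.const_mul x
  apply h5.congr
  intro n
  have hF0 : (0:ℝ) < ((2*n+2).factorial : ℝ) := by exact_mod_cast Nat.factorial_pos _
  rw [Real.sqrt_div (by positivity : (0:ℝ) ≤ g0^(2*n+2)),
    show g0^(2*n+2) = (g0^(n+1))^2 from by rw [← pow_mul, show (n+1)*2 = 2*n+2 from by omega],
    Real.sqrt_sq (by positivity), mul_div_assoc]

/-- Pointwise convergence of the m sub-interval spline approximations to erf. -/
theorem subinterval_spline_tendsto_erf (m : ℕ) (hm : 1 ≤ m) (x : ℝ) (hx : 0 ≤ x) :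
    Tendsto (fun n : ℕ => fsub n m x) atTop (nhds (erf x)) := by
  have hmpos : (0:ℝ) < m := by exact_mod_cast Nat.pos_of_ne_zero (by omega)
  have hm0 : (m:ℝ) ≠ 0 := hmpos.ne'
  set a : ℕ → ℝ := fun i => i * x / m with ha
  have hcont : Continuous gf := by
    have : Continuous (fun t : ℝ => -t^2) := by continuity
    exact Real.continuous_exp.comp this
  -- fsub rewritten
  have hfsub : ∀ n, fsub n m x = (2/Real.sqrt π) * ∑ i ∈ Finset.range m,
      (∑ k ∈ Finset.range (n+1), c n k * (a (i+1) - a i)^(k+1) *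
        (iteratedDeriv k gf (a i) + (-1:ℝ)^k * iteratedDeriv k gf (a (i+1)))) := by
    intro n
    rw [fsub]
    congr 1
    apply Finset.sum_congr rfl
    intro i _
    apply Finset.sum_congr rfl
    intro k _
    have hai : a i = (i:ℝ)*x/m := rfl
    have hai1 : a (i+1) = ((i:ℝ)+1)*x/m := by rw [ha]; push_cast; ring
    have hstep : a (i+1) - a i = x / m := by rw [hai, hai1]; field_simp; ring
    have hsq1 : (i:ℝ)^2*x^2/(m:ℝ)^2 = (a i)^2 := by rw [hai]; ring
    have hsq2 : ((i:ℝ)+1)^2*x^2/(m:ℝ)^2 = (a (i+1))^2 := by rw [hai1]; ring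
    simp only [iteratedDeriv_gf, p_eq]
    rw [hstep, hsq1, hsq2, ← hai, ← hai1]
    ring
  -- erf rewritten
  have herf : erf x = (2/Real.sqrt π) * ∑ i ∈ Finset.range m,
      ∫ t in (a i)..(a (i+1)), gf t := by
    rw [erf]
    congr 1
    rw [intervalIntegral.sum_integral_adjacent_intervals
      (fun i _ => (hcont.intervalIntegrable _ _))]
    have h0 : a 0 = 0 := by simp [ha]
    have hmx : a m = x := by rw [ha]; field_simp
    rw [h0, hmx]
    rfl
  -- term-wise convergence
  have hterm : ∀ i ∈ Finset.range m, Tendsto (fun n : ℕ =>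
      (∑ k ∈ Finset.range (n+1), c n k * (a (i+1) - a i)^(k+1) *
        (iteratedDeriv k gf (a i) + (-1:ℝ)^k * iteratedDeriv k gf (a (i+1))))
      - ∫ t in (a i)..(a (i+1)), gf t) atTop (nhds 0) := by
    intro i hi
    have him : (i:ℝ) + 1 ≤ m := by
      have := Finset.mem_range.mp hi
      exact_mod_cast Nat.succ_le_of_lt this
    have h1 : 0 ≤ a i := by rw [ha]; positivity
    have h2 : a i ≤ a (i+1) := by
      show (i:ℝ)*x/(m:ℝ) ≤ ((i+1:ℕ):ℝ)*x/(m:ℝ)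
      push_cast
      gcongr
      linarith
    have h3 : a (i+1) ≤ x := by
      rw [ha]
      rw [div_le_iff₀ hmpos]
      push_cast
      nlinarith
    apply squeeze_zero_norm (fun n => ?_) (bound_tendsto x hx)
    rw [Real.norm_eq_abs]
    exact key_bound n x (a i) (a (i+1)) h1 h2 h3
  -- assemble
  have hdiff : Tendsto (fun n : ℕ => fsub n m x - erf x) atTop (nhds 0) := by
    have hsum := tendsto_finset_sum (Finset.range m) hterm
    rw [Finset.sum_const, smul_zero] at hsum
    have hmul := hsum.const_mul (2/Real.sqrt π)
    rw [mul_zero] at hmul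
    apply hmul.congr
    intro n
    rw [hfsub n, herf, Finset.sum_sub_distrib, mul_sub]
  have := hdiff.add_const (erf x)
  rw [zero_add] at this
  apply this.congr
  intro n
  ring
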